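/- For a homogeneous multivector H ∈ ⋀^pX, the following are equivalent, and each is equivalent to H being simple: (i) (F⌟H)∧H = 0 for all F ∈ ⋀^{p−1}X; (ii) (H⌟G)⌟H = 0 for all G ∈ ⋀^{p+1}X; (iii) ⟨F⌟H, H⌟G⟩ = 0 for all F ∈ ⋀^{p−1}X and G ∈ ⋀^{p+1}X. -/

import Mathlib

/-!
Setup: `X` is a finite-dimensional real inner product space, `⋀X` its exterior
algebra.  We hypothesize a bilinear form `innE` on the exterior algebra which makes
the wedges of any orthonormal basis of `X` (over increasing index sets) orthonormal
— this characterizes the inner product of the paper — and a bilinear left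
contraction `lcontr` adjoint to the wedge product: `⟨M⌟N, L⟩ = ⟨N, M∧L⟩`.
-/

noncomputable section

open ExteriorAlgebra

/-- The wedge product `v_{i₁} ∧ ⋯ ∧ v_{i_p}` of the vectors `v i`, `i ∈ s`,
taken in increasing order of the indices. -/
def wedgeOf {X : Type*} [AddCommGroup X] [Module ℝ X] {n : ℕ}
    (v : Fin n → X) (s : Finset (Fin n)) : ExteriorAlgebra ℝ X :=
  ((s.sort (· ≤ ·)).map fun i => ι ℝ (v i)).prod

/-- The inner space `isp M = {v : v ∧ M = 0}`. -/
def isp {X : Type*} [AddCommGroup X] [Module ℝ X]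
    (M : ExteriorAlgebra ℝ X) : Submodule ℝ X where
  carrier := {x | ι ℝ x * M = 0}
  add_mem' := by
    intro a b ha hb
    simp only [Set.mem_setOf_eq, map_add, add_mul] at *
    rw [ha, hb, add_zero]
  zero_mem' := by simp
  smul_mem' := by
    intro c x hx
    simp only [Set.mem_setOf_eq, map_smul, smul_mul_assoc] at *
    rw [hx, smul_zero]

/-- The space `{v : v ⌟ M = 0}`, whose orthogonal complement is the outer space. -/
def ospKer {X : Type*} [NormedAddCommGroup X] [InnerProductSpace ℝ X]
    (lcontr : ExteriorAlgebra ℝ X →ₗ[ℝ] ExteriorAlgebra ℝ X →ₗ[ℝ] ExteriorAlgebra ℝ X)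
    (M : ExteriorAlgebra ℝ X) : Submodule ℝ X where
  carrier := {x | lcontr (ι ℝ x) M = 0}
  add_mem' := by
    intro a b ha hb
    simp only [Set.mem_setOf_eq, map_add, LinearMap.add_apply] at *
    rw [ha, hb, add_zero]
  zero_mem' := by simp
  smul_mem' := by
    intro c x hx
    simp only [Set.mem_setOf_eq, map_smul, LinearMap.smul_apply] at *
    rw [hx, smul_zero]

/-- The outer space `osp M = {v : v ⌟ M = 0}ᗮ`. -/
def osp {X : Type*} [NormedAddCommGroup X] [InnerProductSpace ℝ X]
    (lcontr : ExteriorAlgebra ℝ X →ₗ[ℝ] ExteriorAlgebra ℝ X →ₗ[ℝ] ExteriorAlgebra ℝ X)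
    (M : ExteriorAlgebra ℝ X) : Submodule ℝ X :=
  (ospKer lcontr M)ᗮ

/-- `innE` is the inner product of `⋀X`: for every orthonormal basis of `X`, the
wedges of basis vectors over increasing index sets form an orthonormal family. -/
def InnerOK {X : Type*} [NormedAddCommGroup X] [InnerProductSpace ℝ X]
    (innE : ExteriorAlgebra ℝ X →ₗ[ℝ] ExteriorAlgebra ℝ X →ₗ[ℝ] ℝ) : Prop :=
  ∀ (m : ℕ) (w : OrthonormalBasis (Fin m) ℝ X) (s t : Finset (Fin m)),
    innE (wedgeOf (⇑w) s) (wedgeOf (⇑w) t) = if s = t then 1 else 0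

/-- `lcontr` is the left contraction: `⟨M ⌟ N, L⟩ = ⟨N, M ∧ L⟩`. -/
def ContrOK {X : Type*} [NormedAddCommGroup X] [InnerProductSpace ℝ X]
    (innE : ExteriorAlgebra ℝ X →ₗ[ℝ] ExteriorAlgebra ℝ X →ₗ[ℝ] ℝ)
    (lcontr : ExteriorAlgebra ℝ X →ₗ[ℝ] ExteriorAlgebra ℝ X →ₗ[ℝ] ExteriorAlgebra ℝ X) :
    Prop :=
  ∀ M N L : ExteriorAlgebra ℝ X, innE (lcontr M N) L = innE N (M * L)




/-- A blade (simple multivector): a scalar multiple of an exterior product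
`v₁ ∧ ⋯ ∧ v_p` of vectors of `X` (`p ≥ 0`; scalars and `0` are blades). -/
def IsBlade {X : Type*} [AddCommGroup X] [Module ℝ X]
    (M : ExteriorAlgebra ℝ X) : Prop :=
  ∃ (c : ℝ) (p : ℕ) (f : Fin p → X), M = c • (List.ofFn fun i => ι ℝ (f i)).prod


namespace SimplicityAux
open Submodule

section generalX
def IsSign (ε : ℝ) : Prop := ε = 1 ∨ ε = -1

lemma IsSign.one : IsSign 1 := Or.inl rfl
lemma IsSign.mul {a b : ℝ} (ha : IsSign a) (hb : IsSign b) : IsSign (a * b) := by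
  rcases ha with h | h <;> rcases hb with h' | h' <;> simp [h, h', IsSign]
lemma IsSign.ne_zero {a : ℝ} (ha : IsSign a) : a ≠ 0 := by
  rcases ha with h | h <;> simp [h]
lemma IsSign.mul_self {a : ℝ} (ha : IsSign a) : a * a = 1 := by
  rcases ha with h | h <;> simp [h]

variable {X : Type*} [AddCommGroup X] [Module ℝ X]

lemma ι_anticomm (x y : X) : ι ℝ x * ι ℝ y = -(ι ℝ y * ι ℝ x) := by
  have h := ι_add_mul_swap (R := ℝ) x y
  rw [eq_neg_iff_add_eq_zero]
  exact h

lemma perm_prod {α : Type*} {v : α → X} {l₁ l₂ : List α} (h : l₁.Perm l₂) :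
    ∃ ε : ℝ, IsSign ε ∧
      (l₁.map fun i => ι ℝ (v i)).prod = ε • (l₂.map fun i => ι ℝ (v i)).prod := by
  induction h with
  | nil => exact ⟨1, IsSign.one, by simp⟩
  | cons x h ih =>
      obtain ⟨ε, hs, hε⟩ := ih
      exact ⟨ε, hs, by simp [hε, mul_smul_comm]⟩
  | swap x y l =>
      refine ⟨-1, Or.inr rfl, ?_⟩
      simp only [List.map_cons, List.prod_cons, ← mul_assoc, ι_anticomm (v y) (v x)]
      simp
  | trans h₁ h₂ ih₁ ih₂ =>
      obtain ⟨ε₁, hs₁, hε₁⟩ := ih₁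
      obtain ⟨ε₂, hs₂, hε₂⟩ := ih₂
      exact ⟨ε₁ * ε₂, hs₁.mul hs₂, by rw [hε₁, hε₂, smul_smul]⟩

variable {n : ℕ} {v : Fin n → X}

lemma wedgeOf_empty : wedgeOf v ∅ = 1 := by simp [wedgeOf]

lemma wedgeOf_singleton (i : Fin n) : wedgeOf v {i} = ι ℝ (v i) := by
  simp [wedgeOf]

lemma sort_insert_perm {i : Fin n} {s : Finset (Fin n)} (h : i ∉ s) :
    ((insert i s).sort (· ≤ ·)).Perm (i :: s.sort (· ≤ ·)) :=
  ((insert i s).sort_perm_toList _).trans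
    ((Finset.toList_insert h).trans ((s.sort_perm_toList _).symm.cons i))

lemma mul_wedgeOf {i : Fin n} {s : Finset (Fin n)} (h : i ∉ s) :
    ∃ ε : ℝ, IsSign ε ∧ ι ℝ (v i) * wedgeOf v s = ε • wedgeOf v (insert i s) := by
  obtain ⟨ε, hs, hε⟩ := perm_prod (v := v) (sort_insert_perm h)
  refine ⟨ε, hs, ?_⟩
  have : wedgeOf v (insert i s) = ε • (ι ℝ (v i) * wedgeOf v s) := by
    simpa [wedgeOf] using hε
  rw [this, smul_smul, hs.mul_self, one_smul]


lemma wedge_of_perm {s : Finset (Fin n)} {l : List (Fin n)}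
    (h : (s.sort (· ≤ ·)).Perm l) :
    ∃ ε : ℝ, IsSign ε ∧ wedgeOf v s = ε • (l.map fun i => ι ℝ (v i)).prod :=
  perm_prod h

lemma ι_mul_wedgeOf_self {i : Fin n} {s : Finset (Fin n)} (h : i ∈ s) :
    ι ℝ (v i) * wedgeOf v s = 0 := by
  have hper : (s.sort (· ≤ ·)).Perm (i :: (s.erase i).sort (· ≤ ·)) := by
    refine (s.sort_perm_toList _).trans ?_
    have h1 : (insert i (s.erase i)).toList.Perm (i :: (s.erase i).toList) :=
      Finset.toList_insert (Finset.notMem_erase i s)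
    rw [Finset.insert_erase h] at h1
    exact h1.trans (((s.erase i).sort_perm_toList _).symm.cons i)
  obtain ⟨ε, hs, hε⟩ := wedge_of_perm (v := v) hper
  rw [hε]
  simp only [List.map_cons, List.prod_cons, ← mul_assoc]
  rw [mul_smul_comm, ← mul_assoc, ι_sq_zero, zero_mul, smul_zero]

lemma wedgeOf_mul_ι {j : Fin n} {s : Finset (Fin n)} (h : j ∈ s) :
    ∃ ε : ℝ, IsSign ε ∧ wedgeOf v s = ε • (wedgeOf v (s.erase j) * ι ℝ (v j)) := by
  have hper : (s.sort (· ≤ ·)).Perm ((s.erase j).sort (· ≤ ·) ++ [j]) := by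
    refine (s.sort_perm_toList _).trans ?_
    have h1 : (insert j (s.erase j)).toList.Perm (j :: (s.erase j).toList) :=
      Finset.toList_insert (Finset.notMem_erase j s)
    rw [Finset.insert_erase h] at h1
    refine h1.trans ?_
    refine (((s.erase j).toList.perm_append_singleton j).symm).trans ?_
    exact ((s.erase j).sort_perm_toList _).symm.append (List.Perm.refl [j])
  obtain ⟨ε, hs, hε⟩ := wedge_of_perm (v := v) hper
  refine ⟨ε, hs, ?_⟩
  rw [hε]
  simp [wedgeOf]

lemma listProd_ι_mem (l : List X) :
    (l.map (ι ℝ)).prod ∈ ⋀[ℝ]^(l.length) X := by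
  induction l with
  | nil => simpa using Submodule.one_le.mpr le_rfl trivial
  | cons x l ih =>
      simp only [List.map_cons, List.prod_cons, List.length_cons]
      have h2 : ι ℝ x * (l.map (ι ℝ)).prod ∈
          LinearMap.range (ι ℝ : X →ₗ[ℝ] ExteriorAlgebra ℝ X) *
            LinearMap.range (ι ℝ : X →ₗ[ℝ] ExteriorAlgebra ℝ X) ^ l.length :=
        Submodule.mul_mem_mul (LinearMap.mem_range_self _ x) ih
      rw [← pow_succ'] at h2
      exact h2

lemma wedgeOf_mem (s : Finset (Fin n)) : wedgeOf v s ∈ ⋀[ℝ]^(s.card) X := by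
  have := listProd_ι_mem (X := X) ((s.sort (· ≤ ·)).map v)
  simpa [wedgeOf, List.map_map, Function.comp_def, Finset.length_sort] using this

lemma isBlade_smul_wedgeOf (c : ℝ) (s : Finset (Fin n)) :
    IsBlade (c • wedgeOf (X := X) v s) := by
  refine ⟨c, (s.sort (· ≤ ·)).length, fun i => v ((s.sort (· ≤ ·)).get i), ?_⟩
  congr 1
  rw [wedgeOf]
  congr 1
  rw [← List.ofFn_get (s.sort (· ≤ ·)), List.map_ofFn]
  simp [Function.comp]


/-- anticommuting a vector through a product of `p` vectors. -/
lemma ι_mul_list_comm (x : X) (l : List X) :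
    ι ℝ x * (l.map (ι ℝ)).prod = ((-1 : ℝ) ^ l.length) • ((l.map (ι ℝ)).prod * ι ℝ x) := by
  induction l with
  | nil => simp
  | cons y l ih =>
      have hxy : ι ℝ x * ι ℝ y = -(ι ℝ y * ι ℝ x) := by
        rw [eq_neg_iff_add_eq_zero]; exact ι_add_mul_swap x y
      simp only [List.map_cons, List.prod_cons, List.length_cons]
      rw [← mul_assoc, hxy, neg_mul, mul_assoc, ih, pow_succ]
      simp [mul_smul_comm, mul_assoc, smul_smul, mul_comm]

end generalX

section innerX
variable {X : Type*} [NormedAddCommGroup X] [InnerProductSpace ℝ X]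
variable {n : ℕ} {v : Fin n → X}

local notation "stdB" => stdOrthonormalBasis ℝ X



/-- Key closure lemma: multiplying an element of the span of wedges over `𝒮` by
`ι x` for `x` in the span of `v '' I` lands in the span of wedges over `𝒯`. -/
lemma ι_mul_mem_span {I : Set (Fin n)} {𝒮 𝒯 : Set (Finset (Fin n))}
    (hins : ∀ s ∈ 𝒮, ∀ i ∈ I, i ∉ s → insert i s ∈ 𝒯) {x : X}
    (hx : x ∈ span ℝ (v '' I)) {z : ExteriorAlgebra ℝ X}
    (hz : z ∈ span ℝ (wedgeOf v '' 𝒮)) :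
    ι ℝ x * z ∈ span ℝ (wedgeOf v '' 𝒯) := by
  induction hx using span_induction with
  | mem x hxI =>
      obtain ⟨i, hiI, rfl⟩ := hxI
      induction hz using span_induction with
      | mem w hw =>
          obtain ⟨s, hs, rfl⟩ := hw
          by_cases hi : i ∈ s
          · rw [ι_mul_wedgeOf_self hi]; exact zero_mem _
          · obtain ⟨ε, hε, heq⟩ := mul_wedgeOf (v := v) hi
            rw [heq]
            exact smul_mem _ _ (subset_span ⟨_, hins s hs i hiI hi, rfl⟩)
      | zero => simpa using zero_mem _
      | add a c ha hc iha ihc => rw [mul_add]; exact add_mem iha ihc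
      | smul r a ha iha => rw [mul_smul_comm]; exact smul_mem _ _ iha
  | zero => simpa using zero_mem _
  | add a c ha hc iha ihc => rw [map_add, add_mul]; exact add_mem iha ihc
  | smul r a ha iha => rw [map_smul, smul_mul_assoc]; exact smul_mem _ _ iha

lemma list_ι_mul_mem_span {𝒮 : Set (Finset (Fin n))}
    (hins : ∀ s ∈ 𝒮, ∀ i : Fin n, i ∉ s → insert i s ∈ 𝒮)
    (l : List (Fin n)) {z : ExteriorAlgebra ℝ X}
    (hz : z ∈ span ℝ (wedgeOf v '' 𝒮)) :
    (l.map fun i => ι ℝ (v i)).prod * z ∈ span ℝ (wedgeOf v '' 𝒮) := by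
  induction l with
  | nil => simpa using hz
  | cons i l ih =>
      simp only [List.map_cons, List.prod_cons, mul_assoc]
      exact ι_mul_mem_span (I := Set.univ)
        (fun s hs j hj hjs => hins s hs j hjs)
        (subset_span ⟨i, trivial, rfl⟩) ih


lemma top_le_span_wedge (b : Module.Basis (Fin n) ℝ X) :
    ⊤ ≤ span ℝ (Set.range (wedgeOf (X := X) ⇑b)) := by
  have hrange : Set.range (wedgeOf (X := X) ⇑b) = wedgeOf (X := X) ⇑b '' Set.univ := by
    simp
  intro z hz
  clear hz
  rw [hrange]
  induction z using ExteriorAlgebra.induction with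
  | algebraMap r =>
      rw [Algebra.algebraMap_eq_smul_one]
      exact smul_mem _ _ (subset_span ⟨∅, trivial, wedgeOf_empty⟩)
  | ι x =>
      have h1 : (1 : ExteriorAlgebra ℝ X) ∈ span ℝ (wedgeOf (X := X) ⇑b '' Set.univ) :=
        subset_span ⟨∅, trivial, wedgeOf_empty⟩
      have hx : x ∈ span ℝ (⇑b '' (Set.univ : Set (Fin n))) := by
        rw [Set.image_univ, b.span_eq]; trivial
      simpa using ι_mul_mem_span (𝒯 := Set.univ) (fun s _ i _ _ => trivial) hx h1
  | mul a c ha hc =>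
      induction ha using span_induction with
      | mem w hw =>
          obtain ⟨s, _, rfl⟩ := hw
          have := list_ι_mul_mem_span (v := ⇑b) (𝒮 := Set.univ)
            (fun s _ i _ => trivial) (s.sort (· ≤ ·)) hc
          simpa [wedgeOf] using this
      | zero => simpa using zero_mem _
      | add a₁ a₂ h₁ h₂ ih₁ ih₂ => rw [add_mul]; exact add_mem ih₁ ih₂
      | smul r a₁ h₁ ih₁ => rw [smul_mul_assoc]; exact smul_mem _ _ ih₁
  | add a c ha hc => exact add_mem ha hc

variable (innE : ExteriorAlgebra ℝ X →ₗ[ℝ] ExteriorAlgebra ℝ X →ₗ[ℝ] ℝ)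
variable (hinn : InnerOK innE) (b : OrthonormalBasis (Fin n) ℝ X)

include hinn in
lemma indep_wedge : LinearIndependent ℝ (fun s : Finset (Fin n) => wedgeOf (X := X) ⇑b s) := by
  rw [linearIndependent_iff']
  intro t g hsum s hs
  have := congrArg (fun z => innE z (wedgeOf (X := X) ⇑b s)) hsum
  simp only [map_sum, LinearMap.coe_sum, Finset.sum_apply, map_smul,
    LinearMap.smul_apply, map_zero, LinearMap.zero_apply, smul_eq_mul] at this
  rw [Finset.sum_eq_single s] at this
  · rwa [hinn n b s s, if_pos rfl, mul_one] at this
  · intro t' _ hne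
    rw [hinn n b t' s, if_neg hne, mul_zero]
  · intro hns; exact absurd hs hns
  
/-- The wedges of an orthonormal basis form a basis of the exterior algebra. -/
def basisE : Module.Basis (Finset (Fin n)) ℝ (ExteriorAlgebra ℝ X) :=
  Module.Basis.mk (indep_wedge innE hinn b) (top_le_span_wedge b.toBasis)

lemma basisE_apply (s : Finset (Fin n)) : basisE innE hinn b s = wedgeOf (X := X) ⇑b s := by
  exact Module.Basis.mk_apply _ _ _

lemma coeff_eq (z : ExteriorAlgebra ℝ X) (t : Finset (Fin n)) :
    innE z (wedgeOf (X := X) ⇑b t) = (basisE innE hinn b).repr z t := by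
  have : (innE.flip (wedgeOf (X := X) ⇑b t)) =
      (Finsupp.lapply t : (Finset (Fin n) →₀ ℝ) →ₗ[ℝ] ℝ) ∘ₗ
        ((basisE innE hinn b).repr : ExteriorAlgebra ℝ X ≃ₗ[ℝ] _) := by
    refine (basisE innE hinn b).ext fun s => ?_
    simp only [LinearMap.flip_apply, LinearMap.comp_apply, LinearEquiv.coe_coe,
      Module.Basis.repr_self, Finsupp.lapply_apply, Finsupp.single_apply]
    rw [basisE_apply, hinn n b s t]
  exact LinearMap.congr_fun this z

include hinn in
lemma eq_zero_of_coeff (z : ExteriorAlgebra ℝ X)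
    (h : ∀ t : Finset (Fin n), innE z (wedgeOf (X := X) ⇑b t) = 0) : z = 0 := by
  have : (basisE innE hinn b).repr z = 0 := by
    ext t; rw [← coeff_eq innE hinn b]; exact h t
  simpa using (basisE innE hinn b).repr.map_eq_zero_iff.mp this

include hinn in
lemma eq_of_coeff {z₁ z₂ : ExteriorAlgebra ℝ X}
    (h : ∀ t : Finset (Fin n), innE z₁ (wedgeOf (X := X) ⇑b t)
      = innE z₂ (wedgeOf (X := X) ⇑b t)) : z₁ = z₂ := by
  have := eq_zero_of_coeff innE hinn b (z₁ - z₂) (fun t => by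
    rw [map_sub, LinearMap.sub_apply, h t, sub_self])
  exact sub_eq_zero.mp this

include hinn in
lemma mem_span_of_coeff {𝒮 : Set (Finset (Fin n))} {z : ExteriorAlgebra ℝ X}
    (h : ∀ t ∉ 𝒮, innE z (wedgeOf (X := X) ⇑b t) = 0) :
    z ∈ span ℝ (wedgeOf (X := X) ⇑b '' 𝒮) := by
  have himg : wedgeOf (X := X) ⇑b '' 𝒮 = ⇑(basisE innE hinn b) '' 𝒮 := by
    apply Set.image_congr
    intro s _; rw [basisE_apply]
  rw [himg, Module.Basis.mem_span_image]
  intro t ht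
  simp only [Finset.mem_coe, Finsupp.mem_support_iff] at ht
  by_contra h𝒮
  exact ht (by rw [← coeff_eq innE hinn b]; exact h t h𝒮)


variable (lcontr : ExteriorAlgebra ℝ X →ₗ[ℝ] ExteriorAlgebra ℝ X →ₗ[ℝ] ExteriorAlgebra ℝ X)

include hinn in
lemma coeff_eq_zero_of_mem_span {𝒮 : Set (Finset (Fin n))} {z : ExteriorAlgebra ℝ X}
    (hz : z ∈ span ℝ (wedgeOf (X := X) ⇑b '' 𝒮)) {t : Finset (Fin n)} (ht : t ∉ 𝒮) :
    innE z (wedgeOf (X := X) ⇑b t) = 0 := by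
  induction hz using span_induction with
  | mem w hw =>
      obtain ⟨s, hs, rfl⟩ := hw
      rw [hinn n b s t, if_neg (fun h : s = t => ht (h ▸ hs))]
  | zero => simp
  | add a c ha hc iha ihc => rw [map_add, LinearMap.add_apply, iha, ihc, add_zero]
  | smul r a ha iha => rw [map_smul, LinearMap.smul_apply, iha, smul_zero]

include hinn in
lemma exteriorPower_eq_span (p : ℕ) :
    ⋀[ℝ]^p X = span ℝ (wedgeOf (X := X) ⇑b '' {s | s.card = p}) := by
  refine le_antisymm ?_ ?_
  · rw [← ExteriorAlgebra.ιMulti_span_fixedDegree ℝ p (M := X)]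
    rw [span_le]
    rintro _ ⟨f, rfl⟩
    clear hinn
    induction p with
    | zero =>
        rw [ExteriorAlgebra.ιMulti_zero_apply]
        exact subset_span ⟨∅, by simp, wedgeOf_empty⟩
    | succ p ih =>
        rw [ExteriorAlgebra.ιMulti_succ_apply]
        refine ι_mul_mem_span (v := ⇑b) (I := Set.univ) (𝒮 := {s | s.card = p})
          (fun s hs i _ his => by simp only [Set.mem_setOf_eq, Finset.card_insert_of_notMem his]; exact congrArg Nat.succ hs)
          ?_ (ih _)
        rw [Set.image_univ]
        have : span ℝ (Set.range ⇑b) = ⊤ := by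
          have := b.toBasis.span_eq
          rwa [b.coe_toBasis] at this
        rw [this]; trivial
  · rw [span_le]
    rintro _ ⟨s, hs, rfl⟩
    exact hs ▸ wedgeOf_mem s


omit b in
include hinn in
lemma innE_grade_orth [FiniteDimensional ℝ X] {a c : ℕ} {M N : ExteriorAlgebra ℝ X}
    (hM : M ∈ ⋀[ℝ]^a X) (hN : N ∈ ⋀[ℝ]^c X) (hac : a ≠ c) : innE M N = 0 := by
  rw [exteriorPower_eq_span innE hinn stdB a] at hM
  rw [exteriorPower_eq_span innE hinn stdB c] at hN
  induction hM using span_induction with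
  | mem w hw =>
      obtain ⟨s, hs, rfl⟩ := hw
      induction hN using span_induction with
      | mem w' hw' =>
          obtain ⟨t, ht, rfl⟩ := hw'
          rw [hinn _ stdB s t, if_neg]
          rintro rfl
          exact hac (hs.symm.trans ht)
      | zero => simp
      | add x y hx hy ihx ihy => rw [map_add, ihx, ihy, add_zero]
      | smul r x hx ihx => rw [map_smul, smul_eq_mul, ihx, mul_zero]
  | zero => simp
  | add x y hx hy ihx ihy => rw [map_add, LinearMap.add_apply, ihx, ihy, add_zero]
  | smul r x hx ihx => rw [map_smul, LinearMap.smul_apply, smul_eq_mul, ihx, mul_zero]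

lemma mul_mem_grade {a c : ℕ} {M N : ExteriorAlgebra ℝ X}
    (hM : M ∈ ⋀[ℝ]^a X) (hN : N ∈ ⋀[ℝ]^c X) : M * N ∈ ⋀[ℝ]^(a + c) X := by
  have h := Submodule.mul_mem_mul hM hN
  rwa [← pow_add] at h

variable (lcontr : ExteriorAlgebra ℝ X →ₗ[ℝ] ExteriorAlgebra ℝ X →ₗ[ℝ] ExteriorAlgebra ℝ X)

omit b in
include hinn in
lemma lcontr_grade [FiniteDimensional ℝ X] (hc : ContrOK innE lcontr) {a c : ℕ} {M N : ExteriorAlgebra ℝ X}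
    (hM : M ∈ ⋀[ℝ]^a X) (hN : N ∈ ⋀[ℝ]^c X) : lcontr M N ∈ ⋀[ℝ]^(c - a) X := by
  rw [exteriorPower_eq_span innE hinn stdB (c - a)]
  refine mem_span_of_coeff innE hinn stdB (fun t ht => ?_)
  rw [hc M N (wedgeOf ⇑stdB t)]
  refine innE_grade_orth innE hinn hN (mul_mem_grade hM (wedgeOf_mem t)) ?_
  intro heq
  exact ht (by simp only [Set.mem_setOf_eq]; omega)

omit b in
include hinn in
lemma grade_disjoint [FiniteDimensional ℝ X] {a c : ℕ} {M : ExteriorAlgebra ℝ X}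
    (hMa : M ∈ ⋀[ℝ]^a X) (hMc : M ∈ ⋀[ℝ]^c X) (hac : a ≠ c) : M = 0 := by
  refine eq_zero_of_coeff innE hinn stdB M (fun t => ?_)
  by_cases h : t.card = c
  · exact innE_grade_orth innE hinn hMa (wedgeOf_mem t) (fun hh => hac (hh.trans h))
  · exact innE_grade_orth innE hinn hMc (wedgeOf_mem t) (fun hh => h hh.symm)

lemma mem_exterior_zero {M : ExteriorAlgebra ℝ X} (hM : M ∈ ⋀[ℝ]^0 X) :
    ∃ r : ℝ, M = r • 1 := by
  change M ∈ LinearMap.range (ι ℝ : X →ₗ[ℝ] ExteriorAlgebra ℝ X) ^ 0 at hM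
  rw [pow_zero] at hM
  obtain ⟨r, hr⟩ := Submodule.mem_one.mp hM
  exact ⟨r, by rw [← hr, Algebra.algebraMap_eq_smul_one]⟩

lemma mem_exterior_one {M : ExteriorAlgebra ℝ X} (hM : M ∈ ⋀[ℝ]^1 X) :
    ∃ x : X, M = ι ℝ x := by
  change M ∈ LinearMap.range (ι ℝ : X →ₗ[ℝ] ExteriorAlgebra ℝ X) ^ 1 at hM
  rw [pow_one] at hM
  obtain ⟨x, hx⟩ := hM
  exact ⟨x, hx.symm⟩

omit b in
include hinn in
lemma innE_symm [FiniteDimensional ℝ X] (M N : ExteriorAlgebra ℝ X) : innE M N = innE N M := by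
  have hM : M ∈ span ℝ (Set.range (wedgeOf (X := X) ⇑stdB)) :=
    top_le_span_wedge (stdB).toBasis trivial
  have hN : N ∈ span ℝ (Set.range (wedgeOf (X := X) ⇑stdB)) :=
    top_le_span_wedge (stdB).toBasis trivial
  induction hM using span_induction with
  | mem w hw =>
      obtain ⟨s, rfl⟩ := hw
      induction hN using span_induction with
      | mem w' hw' =>
          obtain ⟨t, rfl⟩ := hw'
          rw [hinn _ stdB s t, hinn _ stdB t s]
          exact if_congr eq_comm rfl rfl
      | zero => simp
      | add x y hx hy ihx ihy => simp [map_add, LinearMap.add_apply, ihx, ihy]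
      | smul r x hx ihx => simp [map_smul, LinearMap.smul_apply, ihx]
  | zero => simp
  | add x y hx hy ihx ihy => simp [map_add, LinearMap.add_apply, ihx, ihy]
  | smul r x hx ihx => simp [map_smul, LinearMap.smul_apply, ihx]

omit b in
include hinn in
lemma vec_mul_comm [FiniteDimensional ℝ X] {q : ℕ} {u M : ExteriorAlgebra ℝ X}
    (hu : u ∈ ⋀[ℝ]^1 X) (hM : M ∈ ⋀[ℝ]^q X) :
    u * M = ((-1 : ℝ) ^ q) • (M * u) := by
  obtain ⟨x, rfl⟩ := mem_exterior_one hu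
  rw [exteriorPower_eq_span innE hinn stdB q] at hM
  induction hM using span_induction with
  | mem w hw =>
      obtain ⟨s, hs, rfl⟩ := hw
      simp only [Set.mem_setOf_eq] at hs
      subst hs
      have := ι_mul_list_comm x ((s.sort (· ≤ ·)).map ⇑stdB)
      simpa [wedgeOf, List.map_map, Function.comp_def] using this
  | zero => simp
  | add a₁ a₂ h₁ h₂ ih₁ ih₂ => rw [mul_add, add_mul, ih₁, ih₂, smul_add]
  | smul r a₁ h₁ ih₁ =>
      rw [mul_smul_comm, smul_mul_assoc, ih₁, smul_comm]

include hinn in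
lemma innE_ι_basis (x : X) (j : Fin n) :
    innE (ι ℝ x) (ι ℝ (b j)) = (inner ℝ (b j) x : ℝ) := by
  have key : ∀ i : Fin n, innE (ι ℝ (b i)) (ι ℝ (b j)) = if i = j then 1 else 0 := by
    intro i
    have h := hinn n b {i} {j}
    rw [wedgeOf_singleton, wedgeOf_singleton] at h
    rw [h]
    simp [Finset.singleton_inj]
  conv_lhs => rw [← b.sum_repr' x]
  rw [map_sum, map_sum, LinearMap.sum_apply]
  have hterm : ∀ i ∈ Finset.univ,
      innE (ι ℝ ((inner ℝ (b i) x : ℝ) • b i)) (ι ℝ (b j))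
        = if i = j then (inner ℝ (b j) x : ℝ) else 0 := by
    intro i _
    rw [map_smul, map_smul, LinearMap.smul_apply, key i, smul_eq_mul]
    by_cases h : i = j <;> simp [h]
  rw [Finset.sum_congr rfl hterm, Finset.sum_ite_eq' Finset.univ j, if_pos (Finset.mem_univ j)]

include hinn in
lemma lcontr_ι_wedge (hc : ContrOK innE lcontr) {i : Fin n} {T : Finset (Fin n)}
    (hi : i ∈ T) :
    ∃ ε : ℝ, IsSign ε ∧
      lcontr (ι ℝ (b i)) (wedgeOf ⇑b T) = ε • wedgeOf ⇑b (T.erase i) := by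
  obtain ⟨ε, hε, heq⟩ := mul_wedgeOf (v := ⇑b) (Finset.notMem_erase i T)
  rw [Finset.insert_erase hi] at heq
  refine ⟨ε, hε, eq_of_coeff innE hinn b (fun U => ?_)⟩
  rw [hc (ι ℝ (b i)) (wedgeOf ⇑b T) (wedgeOf ⇑b U), map_smul, LinearMap.smul_apply,
    hinn n b (T.erase i) U]
  by_cases hiU : i ∈ U
  · rw [ι_mul_wedgeOf_self hiU, map_zero, if_neg, smul_zero]
    intro h
    exact (h ▸ Finset.notMem_erase i T) hiU
  · obtain ⟨ε', hε', heq'⟩ := mul_wedgeOf (v := ⇑b) hiU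
    rw [heq', map_smul, hinn n b T (insert i U), smul_eq_mul]
    by_cases hTU : T.erase i = U
    · have hins : insert i U = T := by rw [← hTU, Finset.insert_erase hi]
      have hee : ε' = ε := by
        have h2 : ε' • wedgeOf ⇑b T = ε • wedgeOf ⇑b T := by
          rw [← hins, ← heq', ← hTU, Finset.insert_erase hi]
          exact heq
        have h3 := congrArg (fun z => innE z (wedgeOf ⇑b T)) h2
        simp only [map_smul, LinearMap.smul_apply, smul_eq_mul] at h3
        rwa [hinn n b T T, if_pos rfl, mul_one, mul_one] at h3
      rw [if_pos hins.symm, if_pos hTU, hee, mul_one, smul_eq_mul, mul_one]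
    · rw [if_neg hTU, if_neg (fun h : T = insert i U => hTU (by
        rw [h, Finset.erase_insert hiU]))]
      simp


/-- Adapted orthonormal basis for a subspace `W`. -/
lemma exists_adapted [FiniteDimensional ℝ X] (W : Submodule ℝ X) :
    ∃ (b : OrthonormalBasis (Fin (Module.finrank ℝ X)) ℝ X)
      (A : Finset (Fin (Module.finrank ℝ X))),
      (∀ i ∈ A, b i ∈ W) ∧ (∀ j ∉ A, ∀ x ∈ W, (inner ℝ (b j) x : ℝ) = 0) ∧
      A.card = Module.finrank ℝ W ∧ (∀ x ∈ W, x ∈ span ℝ (⇑b '' ↑A)) := by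
  set n := Module.finrank ℝ X with hn
  set k := Module.finrank ℝ W with hk
  have hkn : k ≤ n := Submodule.finrank_le W
  set e := stdOrthonormalBasis ℝ W with he
  set g : Fin k → X := fun i => ((e i : W) : X) with hg
  have hgo : Orthonormal ℝ g := by
    have h1 := e.orthonormal
    rw [orthonormal_iff_ite] at h1 ⊢
    intro i j
    rw [hg]
    rw [← Submodule.coe_inner]
    exact h1 i j
  have hspan : span ℝ (Set.range g) = W := by
    have : Set.range g = W.subtype '' Set.range (⇑e) := by
      rw [← Set.range_comp]; rfl
    rw [this, ← Submodule.map_span, ← e.coe_toBasis, e.toBasis.span_eq,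
      Submodule.map_subtype_top]
  set v : Fin n → X := fun i => if h : (i : ℕ) < k then g ⟨i, h⟩ else 0 with hv
  set sset : Set (Fin n) := {i | (i : ℕ) < k} with hsset
  have hres : Orthonormal ℝ (sset.restrict v) := by
    have hcomp : sset.restrict v = g ∘ (fun i : sset => (⟨(i : Fin n), i.2⟩ : Fin k)) := by
      funext i
      simp only [Set.restrict_apply, Function.comp_apply, hv]
      exact dif_pos i.2
    rw [hcomp]
    exact hgo.comp _ (fun a c hac => by
      apply Subtype.ext
      apply Fin.ext
      simpa using congrArg Fin.val hac)
  obtain ⟨b, hb⟩ := hres.exists_orthonormalBasis_extension_of_card_eq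
    (by simp [hn])
  set A : Finset (Fin n) := Finset.univ.image (fun i : Fin k => Fin.castLE hkn i) with hA
  have hmemA : ∀ j : Fin n, j ∈ A ↔ (j : ℕ) < k := by
    intro j
    constructor
    · intro hj
      obtain ⟨i₀, _, rfl⟩ := Finset.mem_image.mp hj
      exact i₀.2
    · intro hj
      exact Finset.mem_image.mpr ⟨⟨(j : ℕ), hj⟩, Finset.mem_univ _, by
        apply Fin.ext; rfl⟩
  have hbg : ∀ i₀ : Fin k, b (Fin.castLE hkn i₀) = g i₀ := by
    intro i₀
    have h1 : (Fin.castLE hkn i₀ : Fin n) ∈ sset := i₀.2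
    rw [hb _ h1, hv]
    simp only []
    rw [dif_pos (show ((Fin.castLE hkn i₀ : Fin n) : ℕ) < k from i₀.2)]
    congr 1
  refine ⟨b, A, ?_, ?_, ?_, ?_⟩
  · intro i hi
    obtain ⟨i₀, _, rfl⟩ := Finset.mem_image.mp hi
    rw [hbg i₀, hg]
    exact SetLike.coe_mem _
  · intro j hj x hx
    rw [← hspan] at hx
    induction hx using span_induction with
    | mem y hy =>
        obtain ⟨i₀, rfl⟩ := hy
        rw [← hbg i₀]
        have := orthonormal_iff_ite.mp b.orthonormal j (Fin.castLE hkn i₀)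
        rw [this, if_neg]
        intro hjeq
        exact hj ((hmemA j).mpr (by rw [hjeq]; exact i₀.2))
    | zero => exact inner_zero_right _
    | add y z hy hz ihy ihz => rw [inner_add_right, ihy, ihz, add_zero]
    | smul a y hy ihy => rw [inner_smul_right, ihy, mul_zero]
  · rw [hA]
    rw [Finset.card_image_of_injective _ (Fin.castLE_injective hkn)]
    simp
  · intro x hx
    rw [← hspan] at hx
    refine span_le.mpr ?_ hx
    rintro _ ⟨i₀, rfl⟩
    refine subset_span ⟨Fin.castLE hkn i₀, ?_, hbg i₀⟩
    exact Finset.mem_coe.mpr (Finset.mem_image.mpr ⟨i₀, Finset.mem_univ _, rfl⟩)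


include hinn in
lemma vec_mul_comm' [FiniteDimensional ℝ X] {q : ℕ} {u M : ExteriorAlgebra ℝ X}
    (hu : u ∈ ⋀[ℝ]^1 X) (hM : M ∈ ⋀[ℝ]^q X) :
    M * u = ((-1 : ℝ) ^ q) • (u * M) := by
  rw [vec_mul_comm innE hinn hu hM, smul_smul, ← pow_add,
    Even.neg_one_pow ⟨q, rfl⟩, one_smul]

include hinn in
lemma blade_of_C1 [FiniteDimensional ℝ X] (hcok : ContrOK innE lcontr) {p : ℕ}
    {H : ExteriorAlgebra ℝ X} (hH : H ∈ ⋀[ℝ]^p X)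
    (cond : ∀ q : ℕ, q + 1 = p → ∀ F ∈ ⋀[ℝ]^q X, lcontr F H * H = 0) :
    IsBlade H := by
  cases p with
  | zero =>
      obtain ⟨r, hr⟩ := mem_exterior_zero hH
      exact ⟨r, 0, Fin.elim0, by simpa using hr⟩
  | succ q =>
    set V : Set (ExteriorAlgebra ℝ X) := (fun F => lcontr F H) '' (⋀[ℝ]^q X : Set _) with hV
    set W : Submodule ℝ X := Submodule.comap (ι ℝ) (span ℝ V) with hW
    obtain ⟨b, A, hbA, hbperp, hcard, hWspan⟩ := exists_adapted W
    have huV : ∀ u ∈ V, u ∈ ⋀[ℝ]^1 X := by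
      rintro u ⟨F, hF, rfl⟩
      have h1 := lcontr_grade innE hinn lcontr hcok (hF : F ∈ ⋀[ℝ]^q X) hH
      have h2 : q + 1 - q = 1 := by omega
      rwa [h2] at h1
    have hmulH : ∀ u ∈ span ℝ V, u * H = 0 := by
      intro u hu
      induction hu using span_induction with
      | mem u hu => obtain ⟨F, hF, rfl⟩ := hu; exact cond q rfl F hF
      | zero => rw [zero_mul]
      | add a c ha hc iha ihc => rw [add_mul, iha, ihc, add_zero]
      | smul r a ha iha => rw [smul_mul_assoc, iha, smul_zero]
    have hcoeff : ∀ S : Finset (Fin (Module.finrank ℝ X)), S ≠ A →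
        innE H (wedgeOf ⇑b S) = 0 := by
      intro S hSA
      by_cases hSp : S.card = q + 1
      · by_cases hSsub : S ⊆ A
        · have hex : ∃ i ∈ A, i ∉ S := by
            by_contra hno
            push_neg at hno
            exact hSA (Finset.Subset.antisymm hSsub hno)
          obtain ⟨i, hiA, hiS⟩ := hex
          have hbiV : ι ℝ (b i) ∈ span ℝ V := mem_comap.mp (hbA i hiA)
          have hbi0 : ι ℝ (b i) * H = 0 := hmulH _ hbiV
          obtain ⟨ε₂, hε₂, hlc⟩ := lcontr_ι_wedge innE hinn b lcontr hcok
            (Finset.mem_insert_self i S)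
          rw [Finset.erase_insert hiS] at hlc
          have h0 : innE (lcontr (ι ℝ (b i)) (wedgeOf ⇑b (insert i S))) H = 0 := by
            rw [hcok, hbi0, map_zero]
          rw [hlc, map_smul, LinearMap.smul_apply, smul_eq_mul] at h0
          have h1 := (mul_eq_zero.mp h0).resolve_left hε₂.ne_zero
          rw [innE_symm innE hinn]
          exact h1
        · have hex : ∃ j ∈ S, j ∉ A := by
            by_contra hno; push_neg at hno; exact hSsub hno
          obtain ⟨j, hjS, hjA⟩ := hex
          obtain ⟨ε₁, hε₁, herase⟩ := wedgeOf_mul_ι (v := ⇑b) hjS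
          rw [herase, map_smul, smul_eq_mul]
          have hq' : (S.erase j).card = q := by
            rw [Finset.card_erase_of_mem hjS, hSp]; omega
          have hmem : lcontr (wedgeOf ⇑b (S.erase j)) H ∈ V :=
            ⟨wedgeOf ⇑b (S.erase j), by rw [← hq']; exact wedgeOf_mem _, rfl⟩
          obtain ⟨w, hw⟩ := mem_exterior_one (huV _ hmem)
          have hwW : w ∈ W := mem_comap.mpr (by rw [← hw]; exact subset_span hmem)
          rw [← hcok (wedgeOf ⇑b (S.erase j)) H (ι ℝ (b j)), hw,
            innE_ι_basis innE hinn b w j, hbperp j hjA w hwW, mul_zero]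
      · exact innE_grade_orth innE hinn hH (wedgeOf_mem S) (fun h => hSp h.symm)
    have hspanA : H ∈ span ℝ (wedgeOf ⇑b '' {A}) :=
      mem_span_of_coeff innE hinn b (fun t ht => hcoeff t (by simpa using ht))
    rw [Set.image_singleton, mem_span_singleton] at hspanA
    obtain ⟨r, hr⟩ := hspanA
    rw [← hr]
    exact isBlade_smul_wedgeOf r A

include hinn in
lemma C1_of_blade [FiniteDimensional ℝ X] (hcok : ContrOK innE lcontr) {p : ℕ}
    {H : ExteriorAlgebra ℝ X} (hH : H ∈ ⋀[ℝ]^p X) (hbl : IsBlade H) :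
    ∀ q : ℕ, q + 1 = p → ∀ F ∈ ⋀[ℝ]^q X, lcontr F H * H = 0 := by
  intro q hq F hF
  by_cases hz : H = 0
  · rw [hz, map_zero, zero_mul]
  obtain ⟨c, m, f, hcf⟩ := hbl
  have hPmulti : (List.ofFn fun i => ι ℝ (f i)).prod = ιMulti ℝ m f :=
    (ExteriorAlgebra.ιMulti_apply f).symm
  have hind : LinearIndependent ℝ f := by
    by_contra hdep
    apply hz
    rw [hcf, hPmulti, AlternatingMap.map_linearDependent _ f hdep, smul_zero]
  set U : Submodule ℝ X := span ℝ (Set.range f) with hU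
  obtain ⟨b, A, hbA, hbperp, hcard, hUspan⟩ := exists_adapted U
  have hcardA : A.card = m := by
    rw [hcard, hU, finrank_span_eq_card hind, Fintype.card_fin]
  have hlist : ∀ l : List X, (∀ x ∈ l, x ∈ span ℝ (⇑b '' ↑A)) →
      (l.map (ι ℝ)).prod ∈ span ℝ (wedgeOf ⇑b '' {S | S ⊆ A}) := by
    intro l hl
    induction l with
    | nil =>
        simp only [List.map_nil, List.prod_nil]
        exact subset_span ⟨∅, by simp, wedgeOf_empty⟩
    | cons x l ih =>
        simp only [List.map_cons, List.prod_cons]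
        refine ι_mul_mem_span (I := ↑A) (𝒮 := {S | S ⊆ A}) (𝒯 := {S | S ⊆ A})
          (fun s hs i hi his => by
            simp only [Set.mem_setOf_eq] at hs ⊢
            exact Finset.insert_subset (Finset.mem_coe.mp hi) hs) ?_ ?_
        · exact hl x List.mem_cons_self
        · exact ih (fun y hy => hl y (List.mem_cons_of_mem x hy))
  have hofn : (List.ofFn fun i => ι ℝ (f i)) = (List.ofFn f).map (ι ℝ) := by
    rw [List.map_ofFn]; rfl
  have hHspan : H ∈ span ℝ (wedgeOf ⇑b '' {S | S ⊆ A}) := by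
    rw [hcf, hofn]
    refine smul_mem _ _ (hlist _ ?_)
    intro x hx
    rw [List.mem_ofFn] at hx
    obtain ⟨i, rfl⟩ := hx
    exact hUspan _ (subset_span (Set.mem_range_self i))
  have hHm : H ∈ ⋀[ℝ]^m X := by
    rw [hcf, hPmulti]
    exact smul_mem _ c (ExteriorAlgebra.ιMulti_range ℝ m ⟨f, rfl⟩)
  have hpm : p = m := by
    by_contra hne
    exact hz (grade_disjoint innE hinn hH hHm hne)
  have hAmem : H ∈ span ℝ (wedgeOf ⇑b '' {A}) := by
    refine mem_span_of_coeff innE hinn b (fun t ht => ?_)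
    have htA : t ≠ A := by simpa using ht
    by_cases htp : t.card = p
    · by_cases hsub : t ⊆ A
      · exact absurd (Finset.eq_of_subset_of_card_le hsub
          (by rw [hcardA, ← hpm, htp])) htA
      · exact coeff_eq_zero_of_mem_span innE hinn b hHspan (by simpa using hsub)
    · exact innE_grade_orth innE hinn hH (wedgeOf_mem t) (fun h => htp h.symm)
  rw [Set.image_singleton, mem_span_singleton] at hAmem
  obtain ⟨r, hr⟩ := hAmem
  have hu1 : lcontr F H ∈ ⋀[ℝ]^1 X := by
    have h1 := lcontr_grade innE hinn lcontr hcok hF hH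
    have h2 : p - q = 1 := by omega
    rwa [h2] at h1
  obtain ⟨x, hx⟩ := mem_exterior_one hu1
  have hwedgeA : ∀ (j : Fin (Module.finrank ℝ X)), j ∉ A → ∀ T : Finset _,
      innE (wedgeOf ⇑b A) (wedgeOf ⇑b T * ι ℝ (b j)) = 0 := by
    intro j hj T
    have hj1 : ι ℝ (b j) ∈ ⋀[ℝ]^1 X := by
      have h1 := wedgeOf_mem (v := ⇑b) {j}
      rwa [wedgeOf_singleton, Finset.card_singleton] at h1
    have hWT := vec_mul_comm' innE hinn hj1 (wedgeOf_mem (v := ⇑b) T)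
    rw [hWT, map_smul, smul_eq_mul]
    by_cases hjT : j ∈ T
    · rw [ι_mul_wedgeOf_self hjT, map_zero, mul_zero]
    · obtain ⟨ε, hε, hmul⟩ := mul_wedgeOf (v := ⇑b) hjT
      rw [hmul, map_smul, smul_eq_mul,
        hinn (Module.finrank ℝ X) b A (insert j T), if_neg, mul_zero, mul_zero]
      intro h
      exact hj (by rw [h]; exact Finset.mem_insert_self j T)
  have hFw : ∀ z ∈ span ℝ (Set.range (wedgeOf (X := X) ⇑b)),
      ∀ j ∉ A, innE (wedgeOf ⇑b A) (z * ι ℝ (b j)) = 0 := by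
    intro z hz
    induction hz using span_induction with
    | mem w hw =>
        obtain ⟨T, rfl⟩ := hw
        intro j hj
        exact hwedgeA j hj T
    | zero => intro j hj; rw [zero_mul, map_zero]
    | add a c ha hc iha ihc =>
        intro j hj
        rw [add_mul, map_add, iha j hj, ihc j hj, add_zero]
    | smul r a ha iha =>
        intro j hj
        rw [smul_mul_assoc, map_smul, iha j hj, smul_zero]
  have hxj : ∀ j ∉ A, (inner ℝ (b j) x : ℝ) = 0 := by
    intro j hj
    rw [← innE_ι_basis innE hinn b x j, ← hx, hcok, ← hr, map_smul,
      LinearMap.smul_apply, smul_eq_mul,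
      hFw F (top_le_span_wedge b.toBasis trivial) j hj, mul_zero]
  rw [hx]
  conv_lhs => rw [← b.sum_repr' x]
  rw [map_sum, Finset.sum_mul]
  refine Finset.sum_eq_zero (fun j _ => ?_)
  rw [map_smul, smul_mul_assoc]
  by_cases hjA : j ∈ A
  · rw [← hr, mul_smul_comm, ι_mul_wedgeOf_self hjA, smul_zero, smul_zero]
  · rw [hxj j hjA, zero_smul]

include hinn in
lemma C2_iff_C1 [FiniteDimensional ℝ X] (hcok : ContrOK innE lcontr) {p : ℕ}
    {H : ExteriorAlgebra ℝ X} (hH : H ∈ ⋀[ℝ]^p X) :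
    (∀ q : ℕ, q + 1 = p → ∀ F ∈ ⋀[ℝ]^q X, H * lcontr F H = 0) ↔
    (∀ q : ℕ, q + 1 = p → ∀ F ∈ ⋀[ℝ]^q X, lcontr F H * H = 0) := by
  have key : ∀ q : ℕ, q + 1 = p → ∀ F ∈ ⋀[ℝ]^q X,
      lcontr F H * H = ((-1 : ℝ) ^ p) • (H * lcontr F H) := by
    intro q hq F hF
    have hu1 : lcontr F H ∈ ⋀[ℝ]^1 X := by
      have h1 := lcontr_grade innE hinn lcontr hcok hF hH
      have h2 : p - q = 1 := by omega
      rwa [h2] at h1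
    exact vec_mul_comm innE hinn hu1 hH
  constructor
  · intro h q hq F hF
    rw [key q hq F hF, h q hq F hF, smul_zero]
  · intro h q hq F hF
    have h1 := key q hq F hF
    rw [h q hq F hF] at h1
    rcases smul_eq_zero.mp h1.symm with h2 | h2
    · exact absurd h2 (pow_ne_zero p (by norm_num))
    · exact h2

include hinn in
lemma iii_iff_C2 [FiniteDimensional ℝ X] (hcok : ContrOK innE lcontr) {p : ℕ}
    {H : ExteriorAlgebra ℝ X} (hH : H ∈ ⋀[ℝ]^p X) :
    (∀ q : ℕ, q + 1 = p → ∀ F ∈ ⋀[ℝ]^q X, ∀ G ∈ ⋀[ℝ]^(p + 1) X,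
        innE (lcontr F H) (lcontr H G) = 0) ↔
    (∀ q : ℕ, q + 1 = p → ∀ F ∈ ⋀[ℝ]^q X, H * lcontr F H = 0) := by
  constructor
  · intro h q hq F hF
    have hu1 : lcontr F H ∈ ⋀[ℝ]^1 X := by
      have h1 := lcontr_grade innE hinn lcontr hcok hF hH
      have h2 : p - q = 1 := by omega
      rwa [h2] at h1
    have hmul : H * lcontr F H ∈ ⋀[ℝ]^(p + 1) X := mul_mem_grade hH hu1
    refine eq_zero_of_coeff innE hinn stdB (H * lcontr F H) (fun t => ?_)
    by_cases ht : t.card = p + 1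
    · have hG : wedgeOf ⇑stdB t ∈ ⋀[ℝ]^(p + 1) X := ht ▸ wedgeOf_mem t
      rw [innE_symm innE hinn, ← hcok H (wedgeOf ⇑stdB t) (lcontr F H),
        innE_symm innE hinn]
      exact h q hq F hF (wedgeOf ⇑stdB t) hG
    · exact innE_grade_orth innE hinn hmul (wedgeOf_mem t) (fun hh => ht hh.symm)
  · intro h q hq F hF G hG
    rw [innE_symm innE hinn, hcok H G (lcontr F H), h q hq F hF, map_zero]

include hinn in
lemma ii_iff_C2 [FiniteDimensional ℝ X] (hcok : ContrOK innE lcontr) {p : ℕ}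
    {H : ExteriorAlgebra ℝ X} (hH : H ∈ ⋀[ℝ]^p X) :
    (∀ G ∈ ⋀[ℝ]^(p + 1) X, lcontr (lcontr H G) H = 0) ↔
    (∀ q : ℕ, q + 1 = p → ∀ F ∈ ⋀[ℝ]^q X, H * lcontr F H = 0) := by
  constructor
  · intro h q hq F hF
    have hu1 : lcontr F H ∈ ⋀[ℝ]^1 X := by
      have h1 := lcontr_grade innE hinn lcontr hcok hF hH
      have h2 : p - q = 1 := by omega
      rwa [h2] at h1
    have hmul : H * lcontr F H ∈ ⋀[ℝ]^(p + 1) X := mul_mem_grade hH hu1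
    refine eq_zero_of_coeff innE hinn stdB (H * lcontr F H) (fun t => ?_)
    by_cases ht : t.card = p + 1
    · have hG : wedgeOf ⇑stdB t ∈ ⋀[ℝ]^(p + 1) X := ht ▸ wedgeOf_mem t
      have hv1 : lcontr H (wedgeOf ⇑stdB t) ∈ ⋀[ℝ]^1 X := by
        have h1 := lcontr_grade innE hinn lcontr hcok hH hG
        have h2 : p + 1 - p = 1 := by omega
        rwa [h2] at h1
      rw [innE_symm innE hinn, ← hcok H (wedgeOf ⇑stdB t) (lcontr F H),
        innE_symm innE hinn, hcok F H (lcontr H (wedgeOf ⇑stdB t)),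
        vec_mul_comm' innE hinn hv1 hF, map_smul, smul_eq_mul,
        ← hcok (lcontr H (wedgeOf ⇑stdB t)) H F,
        h (wedgeOf ⇑stdB t) hG]
      simp
    · exact innE_grade_orth innE hinn hmul (wedgeOf_mem t) (fun hh => ht hh.symm)
  · intro h G hG
    have hv1 : lcontr H G ∈ ⋀[ℝ]^1 X := by
      have h1 := lcontr_grade innE hinn lcontr hcok hH hG
      have h2 : p + 1 - p = 1 := by omega
      rwa [h2] at h1
    refine eq_zero_of_coeff innE hinn stdB _ (fun t => ?_)
    rw [hcok (lcontr H G) H (wedgeOf ⇑stdB t)]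
    have hvt : lcontr H G * wedgeOf ⇑stdB t ∈ ⋀[ℝ]^(1 + t.card) X :=
      mul_mem_grade hv1 (wedgeOf_mem t)
    by_cases ht : 1 + t.card = p
    · rw [vec_mul_comm innE hinn hv1 (wedgeOf_mem t), map_smul, smul_eq_mul,
        ← hcok (wedgeOf ⇑stdB t) H (lcontr H G),
        innE_symm innE hinn, hcok H G (lcontr (wedgeOf ⇑stdB t) H),
        h t.card (by omega) (wedgeOf ⇑stdB t) (wedgeOf_mem t), map_zero, mul_zero]
    · exact innE_grade_orth innE hinn hH hvt (fun hh => ht hh.symm)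

end innerX

end SimplicityAux

/-- Cartan-type simplicity criteria for `H ∈ ⋀^pX`
(`⋀^{p-1}X` is interpreted as trivial when `p = 0`, so the corresponding
conditions are vacuous). -/
theorem simplicity_criteria {X : Type*} [NormedAddCommGroup X]
    [InnerProductSpace ℝ X] [FiniteDimensional ℝ X]
    (innE : ExteriorAlgebra ℝ X →ₗ[ℝ] ExteriorAlgebra ℝ X →ₗ[ℝ] ℝ)
    (lcontr : ExteriorAlgebra ℝ X →ₗ[ℝ] ExteriorAlgebra ℝ X →ₗ[ℝ] ExteriorAlgebra ℝ X)
    (hinn : InnerOK innE) (hc : ContrOK innE lcontr)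
    (p : ℕ) (H : ExteriorAlgebra ℝ X) (hH : H ∈ ⋀[ℝ]^p X) :
    -- (i)
    ((∀ q : ℕ, q + 1 = p → ∀ F ∈ ⋀[ℝ]^q X, lcontr F H * H = 0) ↔ IsBlade H) ∧
    -- (ii)
    ((∀ G ∈ ⋀[ℝ]^(p + 1) X, lcontr (lcontr H G) H = 0) ↔ IsBlade H) ∧
    -- (iii)
    ((∀ q : ℕ, q + 1 = p → ∀ F ∈ ⋀[ℝ]^q X, ∀ G ∈ ⋀[ℝ]^(p + 1) X,
        innE (lcontr F H) (lcontr H G) = 0) ↔ IsBlade H) := by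
  have hC1 : (∀ q : ℕ, q + 1 = p → ∀ F ∈ ⋀[ℝ]^q X, lcontr F H * H = 0) ↔ IsBlade H :=
    ⟨fun h => SimplicityAux.blade_of_C1 innE hinn lcontr hc hH h,
     fun h => SimplicityAux.C1_of_blade innE hinn lcontr hc hH h⟩
  have hC2 := (SimplicityAux.C2_iff_C1 innE hinn lcontr hc hH).trans hC1
  exact ⟨hC1, (SimplicityAux.ii_iff_C2 innE hinn lcontr hc hH).trans hC2,
    (SimplicityAux.iii_iff_C2 innE hinn lcontr hc hH).trans hC2⟩

end
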